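/- Let f : ℕ → ℝ be such that Δf(n) → ψ as n → ∞ for some integer ψ ∈ ℤ. Then the sequence of exponential sums { ∑_{n=1}^{N} e(f(n)) : N ≥ 1 } is unbounded. -/

import Mathlib

open Filter

/-- `e(x) = e^{2πix}`. -/
noncomputable def e (x : ℝ) : ℂ := Complex.exp (2 * Real.pi * Complex.I * x)

lemma e_abs (x : ℝ) : ‖e x‖ = 1 := by
  rw [e, Complex.norm_exp]
  norm_num [Complex.mul_re]

lemma e_add (x y : ℝ) : e (x + y) = e x * e y := by
  rw [e, e, e, ← Complex.exp_add]
  push_cast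
  ring_nf

lemma e_int (ψ : ℤ) : e (ψ : ℝ) = 1 := by
  rw [e]
  rw [show 2 * (Real.pi : ℂ) * Complex.I * ((ψ : ℝ) : ℂ)
      = (ψ : ℤ) * (2 * Real.pi * Complex.I) by push_cast; ring]
  exact Complex.exp_int_mul_two_pi_mul_I ψ

/-- if `Δf(n) → ψ` for some integer `ψ`, then the exponential sums
`∑_{n=1}^{N} e(f(n))` are unbounded. -/
theorem stmt_6 (f : ℕ → ℝ) (ψ : ℤ)
    (h : Tendsto (fun n : ℕ => f (n + 1) - f n) atTop (nhds (ψ : ℝ))) :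
    ¬ ∃ M : ℝ, ∀ N : ℕ, 1 ≤ N →
      ‖∑ n ∈ Finset.Icc 1 N, e (f n)‖ ≤ M := by
  rintro ⟨M, hM⟩
  have hM0 : 1 ≤ M := by
    have := hM 1 le_rfl
    simpa [e_abs] using this
  -- a n := e (f n)
  set a : ℕ → ℂ := fun n => e (f n) with ha
  have habs : ∀ n, ‖a n‖ = 1 := fun n => e_abs _
  -- choose K with (K+1)/2 > 2M
  obtain ⟨K, hK⟩ : ∃ K : ℕ, 4 * M < (K : ℝ) := exists_nat_gt (4 * M)
  -- the differences tend to 0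
  have hdiff : Tendsto (fun n : ℕ => ‖a (n + 1) - a n‖) atTop (nhds 0) := by
    have h1 : Tendsto (fun n : ℕ => e (f (n + 1) - f n)) atTop (nhds 1) := by
      have hcont : Continuous e := by
        unfold e; fun_prop
      have := (hcont.tendsto _).comp h
      simpa [e_int ψ, Function.comp_def] using this
    have h2 : Tendsto (fun n : ℕ => ‖e (f (n + 1) - f n) - 1‖) atTop (nhds 0) := by
      have := (continuous_norm.tendsto _).comp (h1.sub_const 1)
      simpa [Function.comp_def] using this
    have heq : ∀ n : ℕ, ‖a (n + 1) - a n‖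
        = ‖e (f (n + 1) - f n) - 1‖ := by
      intro n
      have : a (n + 1) - a n = a n * (e (f (n + 1) - f n) - 1) := by
        rw [mul_sub, mul_one, ha]
        simp only
        rw [← e_add]
        ring_nf
      rw [this, norm_mul, habs, one_mul]
    simpa [heq] using h2
  set ε : ℝ := 1 / (2 * (K + 1)) with hε
  have hεpos : 0 < ε := by positivity
  obtain ⟨N₀, hN₀⟩ := (Metric.tendsto_atTop.mp hdiff) ε hεpos
  set N : ℕ := max N₀ 1 with hN
  have hN1 : 1 ≤ N := le_max_right _ _
  have hsmall : ∀ n ≥ N, ‖a (n + 1) - a n‖ ≤ ε := by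
    intro n hn
    have := hN₀ n (le_trans (le_max_left _ _) hn)
    rw [Real.dist_eq] at this
    have := abs_lt.mp this
    linarith [this.2]
  -- |a (N+j) - a N| ≤ j ε
  have hstep : ∀ j : ℕ, j ≤ K → ‖a (N + j) - a N‖ ≤ j * ε := by
    intro j hj
    induction j with
    | zero => simp
    | succ i ih =>
      have hi : i ≤ K := Nat.le_of_succ_le hj
      have h1 := ih hi
      have h2 : ‖a (N + i + 1) - a (N + i)‖ ≤ ε :=
        hsmall (N + i) (Nat.le_add_right _ _)
      calc ‖a (N + (i + 1)) - a N‖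
          = ‖(a (N + i + 1) - a (N + i)) + (a (N + i) - a N)‖ := by
            ring_nf
        _ ≤ ‖a (N + i + 1) - a (N + i)‖ + ‖a (N + i) - a N‖ :=
            norm_add_le _ _
        _ ≤ ((i : ℝ) + 1) * ε := by linarith
        _ = ((i + 1 : ℕ) : ℝ) * ε := by push_cast; ring
  -- each term has real part ≥ 1/2 against a N
  have hre : ∀ n ∈ Finset.Ioc (N - 1) (N + K),
      (1 : ℝ) / 2 ≤ ((starRingEnd ℂ) (a N) * a n).re := by
    intro n hn
    simp only [Finset.mem_Ioc] at hn
    have hnN : N ≤ n := by omega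
    obtain ⟨j, rfl⟩ := Nat.exists_eq_add_of_le hnN
    have hjK : j ≤ K := by omega
    have hd : ‖a (N + j) - a N‖ ≤ j * ε := hstep j hjK
    have hd2 : ‖a (N + j) - a N‖ ≤ 1 / 2 := by
      refine hd.trans ?_
      rw [hε]
      rw [div_eq_iff (by positivity : (2 : ℝ) * (K + 1) ≠ 0)] at *
      have : (j : ℝ) ≤ K := by exact_mod_cast hjK
      rw [mul_one_div, div_le_div_iff₀ (by positivity) (by norm_num)]
      nlinarith
    have hsplit : (starRingEnd ℂ) (a N) * a (N + j)
        = (starRingEnd ℂ) (a N) * a N + (starRingEnd ℂ) (a N) * (a (N + j) - a N) := by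
      ring
    have h1 : (starRingEnd ℂ) (a N) * a N = 1 := by
      rw [← Complex.normSq_eq_conj_mul_self, Complex.normSq_eq_norm_sq, habs]
      norm_num
    have h2 : |((starRingEnd ℂ) (a N) * (a (N + j) - a N)).re| ≤ 1 / 2 := by
      calc |((starRingEnd ℂ) (a N) * (a (N + j) - a N)).re|
          ≤ ‖(starRingEnd ℂ) (a N) * (a (N + j) - a N)‖ := Complex.abs_re_le_norm _
        _ = ‖a (N + j) - a N‖ := by
            rw [norm_mul, Complex.norm_conj, habs, one_mul]
        _ ≤ 1 / 2 := hd2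
    rw [hsplit, Complex.add_re, h1]
    have := abs_le.mp h2
    simp only [Complex.one_re]
    linarith [this.1]
  -- the block sum is large
  set S : ℂ := ∑ n ∈ Finset.Ioc (N - 1) (N + K), a n with hS
  have hScard : (Finset.Ioc (N - 1) (N + K)).card = K + 1 := by
    rw [Nat.card_Ioc]; omega
  have hSlarge : ((K : ℝ) + 1) / 2 ≤ ‖S‖ := by
    have h1 : ((K : ℝ) + 1) / 2 ≤ ((starRingEnd ℂ) (a N) * S).re := by
      rw [hS, Finset.mul_sum, Complex.re_sum]
      calc ((K : ℝ) + 1) / 2 = ∑ _n ∈ Finset.Ioc (N - 1) (N + K), (1 / 2 : ℝ) := by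
            rw [Finset.sum_const, hScard, nsmul_eq_mul]; push_cast; ring
        _ ≤ ∑ n ∈ Finset.Ioc (N - 1) (N + K), ((starRingEnd ℂ) (a N) * a n).re :=
            Finset.sum_le_sum hre
    calc ((K : ℝ) + 1) / 2 ≤ ((starRingEnd ℂ) (a N) * S).re := h1
      _ ≤ ‖(starRingEnd ℂ) (a N) * S‖ := Complex.re_le_norm _
      _ = ‖S‖ := by rw [norm_mul, Complex.norm_conj, habs, one_mul]
  -- but S = T (N+K) - T (N-1), bounded by 2 M
  have hIcc : ∀ m : ℕ, Finset.Icc 1 m = Finset.Ioc 0 m := by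
    intro m; rfl
  have hsplit : ∑ n ∈ Finset.Ioc 0 (N - 1), a n + S = ∑ n ∈ Finset.Ioc 0 (N + K), a n := by
    rw [hS, ← Finset.sum_union]
    · rw [Finset.Ioc_union_Ioc_eq_Ioc (Nat.zero_le _) (by omega)]
    · rw [Finset.disjoint_left]
      intro x hx hx'
      simp only [Finset.mem_Ioc] at hx hx'
      omega
  have hSsmall : ‖S‖ ≤ 2 * M := by
    have h1 : ‖∑ n ∈ Finset.Ioc 0 (N + K), a n‖ ≤ M := by
      rw [← hIcc]; exact hM _ (by omega)
    have h2 : ‖∑ n ∈ Finset.Ioc 0 (N - 1), a n‖ ≤ M := by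
      rcases Nat.eq_zero_or_pos (N - 1) with h0 | h0
      · rw [h0]; simp; linarith
      · rw [← hIcc]; exact hM _ (by omega)
    calc ‖S‖
        = ‖∑ n ∈ Finset.Ioc 0 (N + K), a n - ∑ n ∈ Finset.Ioc 0 (N - 1), a n‖ := by
          rw [← hsplit]; ring_nf
      _ ≤ ‖∑ n ∈ Finset.Ioc 0 (N + K), a n‖
          + ‖∑ n ∈ Finset.Ioc 0 (N - 1), a n‖ := norm_sub_le _ _
      _ ≤ 2 * M := by linarith
  linarith
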